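/- S-lemma-type LMI robustness (Lemma 5): for matrices P, Q, Hermitian A, and ρ ≥ 0, the semi-infinite condition A ⪰ Pᴴ X Q + Qᴴ Xᴴ P for all X with ‖X‖_F ≤ ρ holds if there exists ε ≥ 0 such that the block matrix [[A − ε Qᴴ Q, −ρ Pᴴ],[−ρ P, ε I]] is positive semidefinite. -/

import Mathlib

open Matrix ComplexOrder

/-- The squared Euclidean norm of `X *ᵥ v` is bounded by the squared Frobenius norm of `X`
times the squared Euclidean norm of `v`. -/
lemma aux_frob_bound {m : ℕ} (X : Matrix (Fin m) (Fin m) ℂ) (v : Fin m → ℂ) :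
    ∑ i, ‖(X *ᵥ v) i‖ ^ 2 ≤ (∑ i, ∑ j, ‖X i j‖ ^ 2) * ∑ j, ‖v j‖ ^ 2 := by
  rw [Finset.sum_mul]
  refine Finset.sum_le_sum fun i _ => ?_
  have h1 : ‖(X *ᵥ v) i‖ ≤ ∑ j, ‖X i j‖ * ‖v j‖ := by
    simpa [Matrix.mulVec, dotProduct] using
      norm_sum_le Finset.univ (fun j => X i j * v j)
  calc ‖(X *ᵥ v) i‖ ^ 2 ≤ (∑ j, ‖X i j‖ * ‖v j‖) ^ 2 :=
        pow_le_pow_left₀ (norm_nonneg _) h1 2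
    _ ≤ (∑ j, ‖X i j‖ ^ 2) * ∑ j, ‖v j‖ ^ 2 :=
        Finset.sum_mul_sq_le_sq_mul_sq _ _ _

lemma aux_star_dot {m : ℕ} (v : Fin m → ℂ) :
    star v ⬝ᵥ v = ((∑ i, ‖v i‖ ^ 2 : ℝ) : ℂ) := by
  simp [dotProduct, RCLike.conj_mul]

lemma aux_quad_expand {n m : ℕ} (A : Matrix (Fin n) (Fin n) ℂ)
    (P Q : Matrix (Fin m) (Fin n) ℂ) (ρ ε : ℝ) (z : Fin n → ℂ) (y : Fin m → ℂ) :
    star (Sum.elim z y) ⬝ᵥ ((Matrix.fromBlocks (A - (ε : ℂ) • (Qᴴ * Q)) (-((ρ : ℂ) • Pᴴ))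
        (-((ρ : ℂ) • P)) ((ε : ℂ) • (1 : Matrix (Fin m) (Fin m) ℂ))) *ᵥ Sum.elim z y)
    = star z ⬝ᵥ (A *ᵥ z) - (ε : ℂ) * (star (Q *ᵥ z) ⬝ᵥ (Q *ᵥ z))
      - (ρ : ℂ) * (star z ⬝ᵥ (Pᴴ *ᵥ y)) - (ρ : ℂ) * (star y ⬝ᵥ (P *ᵥ z))
      + (ε : ℂ) * (star y ⬝ᵥ y) := by
  have hstar : star (Sum.elim z y) = Sum.elim (star z) (star y) := by
    funext i; cases i <;> rfl
  have hQ : star z ⬝ᵥ ((Qᴴ * Q) *ᵥ z) = star (Q *ᵥ z) ⬝ᵥ (Q *ᵥ z) := by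
    rw [← Matrix.mulVec_mulVec, Matrix.dotProduct_mulVec, ← Matrix.star_mulVec]
  rw [Matrix.fromBlocks_mulVec, hstar, Sum.elim_comp_inl, Sum.elim_comp_inr,
    sumElim_dotProduct_sumElim]
  simp only [Matrix.sub_mulVec, Matrix.neg_mulVec, Matrix.smul_mulVec,
    Matrix.one_mulVec, dotProduct_add, dotProduct_sub,
    dotProduct_neg, dotProduct_smul, smul_eq_mul, hQ]
  ring

theorem stmt_16 {n m : ℕ}
    (A : Matrix (Fin n) (Fin n) ℂ) (hA : A.IsHermitian)
    (P Q : Matrix (Fin m) (Fin n) ℂ)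
    (ρ : ℝ) (hρ : 0 ≤ ρ)
    (ε : ℝ) (hε : 0 ≤ ε)
    (hLMI : (Matrix.fromBlocks (A - (ε : ℂ) • (Qᴴ * Q)) (-((ρ : ℂ) • Pᴴ))
      (-((ρ : ℂ) • P)) ((ε : ℂ) • (1 : Matrix (Fin m) (Fin m) ℂ))).PosSemidef) :
    ∀ X : Matrix (Fin m) (Fin m) ℂ,
      Real.sqrt (∑ i, ∑ j, ‖X i j‖ ^ 2) ≤ ρ →
      (A - (Pᴴ * X * Q + Qᴴ * Xᴴ * P)).PosSemidef := by
  intro X hX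
  -- Hermitian part
  have hHerm : (A - (Pᴴ * X * Q + Qᴴ * Xᴴ * P)).IsHermitian := by
    unfold Matrix.IsHermitian
    rw [Matrix.conjTranspose_sub, Matrix.conjTranspose_add]
    simp only [Matrix.conjTranspose_mul, Matrix.conjTranspose_conjTranspose, hA.eq]
    rw [Matrix.mul_assoc, Matrix.mul_assoc, add_comm]
  have hSnonneg : (0:ℝ) ≤ ∑ i, ∑ j, ‖X i j‖ ^ 2 :=
    Finset.sum_nonneg fun i _ => Finset.sum_nonneg fun j _ => sq_nonneg _
  have hXle : (∑ i, ∑ j, ‖X i j‖ ^ 2) ≤ ρ ^ 2 := by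
    have := pow_le_pow_left₀ (Real.sqrt_nonneg _) hX 2
    rwa [Real.sq_sqrt hSnonneg] at this
  refine Matrix.PosSemidef.of_dotProduct_mulVec_nonneg hHerm fun z => ?_
  set u : Fin m → ℂ := Q *ᵥ z with hu
  set w : Fin m → ℂ := X *ᵥ u with hw
  have hNw : (∑ i, ‖w i‖ ^ 2) ≤ ρ ^ 2 * ∑ i, ‖u i‖ ^ 2 := by
    calc (∑ i, ‖w i‖ ^ 2) ≤ (∑ i, ∑ j, ‖X i j‖ ^ 2) * ∑ j, ‖u j‖ ^ 2 := aux_frob_bound X u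
      _ ≤ ρ ^ 2 * ∑ i, ‖u i‖ ^ 2 := by
          exact mul_le_mul_of_nonneg_right hXle
            (Finset.sum_nonneg fun i _ => sq_nonneg _)
  have hNu : (0:ℝ) ≤ ∑ i, ‖u i‖ ^ 2 := Finset.sum_nonneg fun i _ => sq_nonneg _
  -- goal quadratic form
  have hgoal : star z ⬝ᵥ ((A - (Pᴴ * X * Q + Qᴴ * Xᴴ * P)) *ᵥ z)
      = star z ⬝ᵥ (A *ᵥ z) - (star z ⬝ᵥ (Pᴴ *ᵥ w)) - (star w ⬝ᵥ (P *ᵥ z)) := by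
    have e1 : (Pᴴ * X * Q) *ᵥ z = Pᴴ *ᵥ w := by
      rw [hw, hu, Matrix.mulVec_mulVec, Matrix.mulVec_mulVec, Matrix.mul_assoc]
    have e2 : star z ⬝ᵥ ((Qᴴ * Xᴴ * P) *ᵥ z) = star w ⬝ᵥ (P *ᵥ z) := by
      have : Qᴴ * Xᴴ * P = (X * Q)ᴴ * P := by rw [Matrix.conjTranspose_mul]
      rw [this, ← Matrix.mulVec_mulVec, Matrix.dotProduct_mulVec, ← Matrix.star_mulVec,
        hw, hu, Matrix.mulVec_mulVec]
    rw [Matrix.sub_mulVec, Matrix.add_mulVec, dotProduct_sub, dotProduct_add,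
      e1, e2]
    ring
  rcases eq_or_lt_of_le hρ with hρ0 | hρpos
  · -- ρ = 0, hence X = 0
    have hS0 : (∑ i, ∑ j, ‖X i j‖ ^ 2) = 0 := le_antisymm (by simpa [← hρ0] using hXle) hSnonneg
    have hX0 : X = 0 := by
      ext i j
      have h1 : ∀ i ∈ Finset.univ, (0:ℝ) ≤ ∑ j, ‖X i j‖ ^ 2 :=
        fun i _ => Finset.sum_nonneg fun j _ => sq_nonneg _
      have h2 := (Finset.sum_eq_zero_iff_of_nonneg h1).mp hS0 i (Finset.mem_univ i)
      have h3 := (Finset.sum_eq_zero_iff_of_nonneg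
        (fun j _ => sq_nonneg ‖X i j‖)).mp h2 j (Finset.mem_univ j)
      simpa using pow_eq_zero_iff (n := 2) (by norm_num) |>.mp h3
    have hw0 : w = 0 := by rw [hw, hX0, Matrix.zero_mulVec]
    have hq := hLMI.dotProduct_mulVec_nonneg (Sum.elim z (0 : Fin m → ℂ))
    rw [aux_quad_expand] at hq
    simp only [star_zero, Matrix.mulVec_zero, dotProduct_zero,
      zero_dotProduct, mul_zero, sub_zero, add_zero] at hq
    rw [hgoal, hw0]
    simp only [star_zero, Matrix.mulVec_zero, dotProduct_zero,
      zero_dotProduct, sub_zero]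
    calc (0:ℂ) ≤ (star z ⬝ᵥ (A *ᵥ z) - (ε : ℂ) * (star u ⬝ᵥ u)) + (ε : ℂ) * (star u ⬝ᵥ u) := by
          refine add_nonneg hq ?_
          rw [aux_star_dot]
          rw [show ((ε:ℂ) * ((∑ i, ‖u i‖ ^ 2 : ℝ) : ℂ)) = ((ε * ∑ i, ‖u i‖ ^ 2 : ℝ) : ℂ) by
            push_cast; ring]
          exact Complex.zero_le_real.mpr (mul_nonneg hε hNu)
      _ = star z ⬝ᵥ (A *ᵥ z) := by ring
  · -- ρ > 0
    set y : Fin m → ℂ := ((ρ : ℂ))⁻¹ • w with hy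
    have hρne : (ρ : ℂ) ≠ 0 := by
      exact_mod_cast Complex.ofReal_ne_zero.mpr (ne_of_gt hρpos)
    have hq := hLMI.dotProduct_mulVec_nonneg (Sum.elim z y)
    rw [aux_quad_expand] at hq
    have hstar_y : star y = ((ρ : ℂ))⁻¹ • star w := by
      rw [hy, star_smul]
      congr 1
      rw [star_inv₀]
      simp [Complex.star_def, Complex.conj_ofReal]
    have hT2 : (ρ : ℂ) * (star z ⬝ᵥ (Pᴴ *ᵥ y)) = star z ⬝ᵥ (Pᴴ *ᵥ w) := by
      rw [hy, Matrix.mulVec_smul, dotProduct_smul, smul_eq_mul, ← mul_assoc,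
        mul_inv_cancel₀ hρne, one_mul]
    have hT3 : (ρ : ℂ) * (star y ⬝ᵥ (P *ᵥ z)) = star w ⬝ᵥ (P *ᵥ z) := by
      rw [hstar_y, smul_dotProduct, smul_eq_mul, ← mul_assoc,
        mul_inv_cancel₀ hρne, one_mul]
    have hYY : star y ⬝ᵥ y = ((ρ : ℂ))⁻¹ * (((ρ : ℂ))⁻¹ * (star w ⬝ᵥ w)) := by
      rw [hy, hstar_y, smul_dotProduct, dotProduct_smul, smul_eq_mul, smul_eq_mul]
    rw [hT2, hT3, hYY] at hq
    have hrest : (0:ℂ) ≤ (ε : ℂ) * ((star u ⬝ᵥ u) - ((ρ : ℂ))⁻¹ * (((ρ : ℂ))⁻¹ * (star w ⬝ᵥ w))) := by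
      rw [aux_star_dot u, aux_star_dot w]
      rw [show ((ε:ℂ) * (((∑ i, ‖u i‖ ^ 2 : ℝ) : ℂ) - ((ρ : ℂ))⁻¹ * (((ρ : ℂ))⁻¹ *
          ((∑ i, ‖w i‖ ^ 2 : ℝ) : ℂ))))
          = ((ε * ((∑ i, ‖u i‖ ^ 2) - ρ⁻¹ * (ρ⁻¹ * ∑ i, ‖w i‖ ^ 2)) : ℝ) : ℂ) by
        push_cast; ring]
      refine Complex.zero_le_real.mpr (mul_nonneg hε (sub_nonneg.mpr ?_))
      rw [← mul_assoc]
      calc ρ⁻¹ * ρ⁻¹ * ∑ i, ‖w i‖ ^ 2 ≤ ρ⁻¹ * ρ⁻¹ * (ρ ^ 2 * ∑ i, ‖u i‖ ^ 2) := by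
            exact mul_le_mul_of_nonneg_left hNw
              (mul_nonneg (inv_nonneg.mpr hρ) (inv_nonneg.mpr hρ))
        _ = ∑ i, ‖u i‖ ^ 2 := by
            field_simp
    calc (0:ℂ) ≤ (star z ⬝ᵥ (A *ᵥ z) - (ε : ℂ) * (star u ⬝ᵥ u)
          - (star z ⬝ᵥ (Pᴴ *ᵥ w)) - (star w ⬝ᵥ (P *ᵥ z))
          + (ε : ℂ) * (((ρ : ℂ))⁻¹ * (((ρ : ℂ))⁻¹ * (star w ⬝ᵥ w))))
          + (ε : ℂ) * ((star u ⬝ᵥ u) - ((ρ : ℂ))⁻¹ * (((ρ : ℂ))⁻¹ * (star w ⬝ᵥ w))) :=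
        add_nonneg hq hrest
      _ = star z ⬝ᵥ ((A - (Pᴴ * X * Q + Qᴴ * Xᴴ * P)) *ᵥ z) := by
        rw [hgoal]; ring
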